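/- The equilibrium map ŝ ↦ s*(ŝ) that sends raw scores to the unique Nash equilibrium is linear in ŝ, and it is a nonexpansive map in the sup norm: ‖s*(ŝ) − s*(t̂)‖_∞ ≤ ‖ŝ − t̂‖_∞ for all ŝ, t̂ ∈ ℝ^n. -/

import Mathlib

open Finset

section stmt19aux
variable (n : ℕ) (lam : Fin n → ℝ)

/-- Auxiliary: the coefficient `μ i = 1 + λ i + 1/(n-1)`. -/
noncomputable def stmt19Mu (i : Fin n) : ℝ := 1 + lam i + 1 / ((n:ℝ) - 1)

/-- Auxiliary constant `c = 1 - (∑ 1/μ j)/(n-1)`. -/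
noncomputable def stmt19C : ℝ := 1 - (∑ j, 1 / stmt19Mu n lam j) / ((n:ℝ) - 1)

/-- Auxiliary: the explicit solution of the equilibrium system. -/
noncomputable def stmt19F (u : Fin n → ℝ) (i : Fin n) : ℝ :=
  (lam i * u i + (∑ j, lam j * u j / stmt19Mu n lam j) / (stmt19C n lam * ((n:ℝ) - 1)))
    / stmt19Mu n lam i

end stmt19aux

/-- the map from raw scores to the Nash equilibrium is linear and
nonexpansive in the sup norm. -/
theorem stmt19 (n : ℕ) (hn : 2 ≤ n) (lam : Fin n → ℝ) (hlam : ∀ i, 0 < lam i) :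
    ∃ A : (Fin n → ℝ) →ₗ[ℝ] (Fin n → ℝ),
      (∀ shat : Fin n → ℝ, ∀ i : Fin n,
        (1 + lam i) * A shat i - (∑ j ∈ Finset.univ.erase i, A shat j) / ((n : ℝ) - 1)
          = lam i * shat i) ∧
      ∀ shat that : Fin n → ℝ, ‖A shat - A that‖ ≤ ‖shat - that‖ := by
  classical
  have hν : (0:ℝ) < (n:ℝ) - 1 := by
    have : (2:ℝ) ≤ n := by exact_mod_cast hn
    linarith
  have hμpos : ∀ i, 0 < stmt19Mu n lam i := by
    intro i
    have h1 := hlam i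
    have h2 : 0 < 1/((n:ℝ)-1) := by positivity
    unfold stmt19Mu
    linarith
  have hT : (∑ j, 1 / stmt19Mu n lam j) < (n:ℝ) - 1 := by
    have h1 : ∀ j : Fin n, 1 / stmt19Mu n lam j < ((n:ℝ)-1)/n := by
      intro j
      have hμ : (n:ℝ)/((n:ℝ)-1) < stmt19Mu n lam j := by
        unfold stmt19Mu
        have heq1 : (n:ℝ)/((n:ℝ)-1) = 1 + 1/((n:ℝ)-1) := by field_simp; ring
        rw [heq1]; linarith [hlam j]
      have hn0 : (0:ℝ) < (n:ℝ)/((n:ℝ)-1) := by positivity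
      calc 1 / stmt19Mu n lam j < 1 / ((n:ℝ)/((n:ℝ)-1)) :=
            one_div_lt_one_div_of_lt hn0 hμ
        _ = ((n:ℝ)-1)/n := by rw [one_div_div]
    calc (∑ j, 1 / stmt19Mu n lam j) < ∑ _j : Fin n, ((n:ℝ)-1)/n := by
          apply Finset.sum_lt_sum_of_nonempty
          · exact univ_nonempty_iff.mpr (Fin.pos_iff_nonempty.mp (by omega))
          · intro j _; exact h1 j
      _ = (n:ℝ) - 1 := by
          rw [Finset.sum_const, card_univ, Fintype.card_fin, nsmul_eq_mul]
          have hn' : (n:ℝ) ≠ 0 := by positivity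
          field_simp
  have hc : 0 < stmt19C n lam := by
    unfold stmt19C
    have : (∑ j, 1 / stmt19Mu n lam j) / ((n:ℝ)-1) < 1 := by
      rw [div_lt_one hν]; exact hT
    linarith
  -- the total-sum identity
  have hsum : ∀ u : Fin n → ℝ,
      ∑ i, stmt19F n lam u i = (∑ j, lam j * u j / stmt19Mu n lam j) / stmt19C n lam := by
    intro u
    set P := ∑ j, lam j * u j / stmt19Mu n lam j with hP
    have hsplit : ∀ i, stmt19F n lam u i
        = lam i * u i / stmt19Mu n lam i
          + P / (stmt19C n lam * ((n:ℝ)-1)) * (1 / stmt19Mu n lam i) := by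
      intro i
      unfold stmt19F
      rw [add_div]
      ring
    rw [Finset.sum_congr rfl fun i _ => hsplit i, Finset.sum_add_distrib,
      ← Finset.mul_sum]
    have hcdef : stmt19C n lam = 1 - (∑ j, 1 / stmt19Mu n lam j) / ((n:ℝ) - 1) := rfl
    set T := ∑ j, 1 / stmt19Mu n lam j with hTdef
    rw [← hP]
    have hKey : stmt19C n lam * ((n:ℝ)-1) = ((n:ℝ)-1) - T := by rw [hcdef]; field_simp
    field_simp
    linear_combination P * hKey
  -- the equilibrium equation
  have heq : ∀ (u : Fin n → ℝ) (i : Fin n),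
      (1 + lam i) * stmt19F n lam u i
        - (∑ j ∈ Finset.univ.erase i, stmt19F n lam u j) / ((n : ℝ) - 1)
        = lam i * u i := by
    intro u i
    rw [Finset.sum_erase_eq_sub (mem_univ i), hsum u]
    set P := ∑ j, lam j * u j / stmt19Mu n lam j with hP
    have hF : stmt19Mu n lam i * stmt19F n lam u i
        = lam i * u i + P / (stmt19C n lam * ((n:ℝ)-1)) := by
      unfold stmt19F
      rw [← hP, mul_comm, div_mul_cancel₀ _ (hμpos i).ne']
    have hμ : stmt19Mu n lam i = 1 + lam i + 1/((n:ℝ)-1) := rfl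
    have h2 : (1 + lam i) * stmt19F n lam u i
        = stmt19Mu n lam i * stmt19F n lam u i - stmt19F n lam u i / ((n:ℝ)-1) := by
      rw [hμ]; field_simp; ring
    rw [h2, hF]
    field_simp
    ring
  refine ⟨{ toFun := stmt19F n lam, map_add' := ?_, map_smul' := ?_ }, ?_, ?_⟩
  · intro u v
    funext i
    unfold stmt19F
    rw [show (∑ j, lam j * (u + v) j / stmt19Mu n lam j)
        = (∑ j, lam j * u j / stmt19Mu n lam j) + ∑ j, lam j * v j / stmt19Mu n lam j by
      rw [← Finset.sum_add_distrib]; exact Finset.sum_congr rfl fun j _ => by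
        simp [Pi.add_apply]; ring]
    simp only [Pi.add_apply]
    ring
  · intro c u
    funext i
    unfold stmt19F
    rw [show (∑ j, lam j * (c • u) j / stmt19Mu n lam j)
        = c * ∑ j, lam j * u j / stmt19Mu n lam j by
      rw [Finset.mul_sum]; exact Finset.sum_congr rfl fun j _ => by
        simp [Pi.smul_apply, smul_eq_mul]; ring]
    simp only [Pi.smul_apply, smul_eq_mul, RingHom.id_apply]
    ring
  · exact heq
  · have key : ∀ u : Fin n → ℝ, ‖stmt19F n lam u‖ ≤ ‖u‖ := by
      intro u
      obtain ⟨i, -, hi⟩ := Finset.exists_max_image (univ : Finset (Fin n))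
        (fun j => |stmt19F n lam u j|) ⟨⟨0, by omega⟩, mem_univ _⟩
      have hE : |∑ j ∈ Finset.univ.erase i, stmt19F n lam u j|
          ≤ ((n:ℝ)-1) * |stmt19F n lam u i| := by
        calc |∑ j ∈ Finset.univ.erase i, stmt19F n lam u j|
            ≤ ∑ j ∈ Finset.univ.erase i, |stmt19F n lam u j| :=
              Finset.abs_sum_le_sum_abs _ _
          _ ≤ ∑ _j ∈ Finset.univ.erase i, |stmt19F n lam u i| :=
              Finset.sum_le_sum fun j _ => hi j (mem_univ _)
          _ = ((n:ℝ)-1) * |stmt19F n lam u i| := by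
              rw [Finset.sum_const, card_erase_of_mem (mem_univ i), card_univ,
                Fintype.card_fin, nsmul_eq_mul]
              congr 1
              push_cast [Nat.cast_sub (by omega : 1 ≤ n)]
              ring
      have heqi := heq u i
      have h1 : (1 + lam i) * stmt19F n lam u i
          = lam i * u i + (∑ j ∈ Finset.univ.erase i, stmt19F n lam u j) / ((n:ℝ)-1) := by
        linarith
      have hEd : |∑ j ∈ Finset.univ.erase i, stmt19F n lam u j| / ((n:ℝ)-1)
          ≤ |stmt19F n lam u i| := by
        rw [div_le_iff₀ hν]
        linarith [hE]
      have habs : (1 + lam i) * |stmt19F n lam u i|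
          ≤ lam i * |u i| + |stmt19F n lam u i| := by
        have e1 : (1 + lam i) * |stmt19F n lam u i|
            = |(1 + lam i) * stmt19F n lam u i| := by
          rw [abs_mul, abs_of_pos (by linarith [hlam i] : (0:ℝ) < 1 + lam i)]
        rw [e1, h1]
        calc |lam i * u i + (∑ j ∈ Finset.univ.erase i, stmt19F n lam u j) / ((n:ℝ)-1)|
            ≤ |lam i * u i|
              + |(∑ j ∈ Finset.univ.erase i, stmt19F n lam u j) / ((n:ℝ)-1)| :=
              abs_add_le _ _
          _ ≤ lam i * |u i| + |stmt19F n lam u i| := by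
              rw [abs_mul, abs_of_pos (hlam i), abs_div, abs_of_pos hν]
              exact add_le_add le_rfl hEd
      have hFu : |stmt19F n lam u i| ≤ |u i| :=
        le_of_mul_le_mul_left (by nlinarith [habs]) (hlam i)
      rw [pi_norm_le_iff_of_nonneg (norm_nonneg u)]
      intro j
      rw [Real.norm_eq_abs]
      calc |stmt19F n lam u j| ≤ |stmt19F n lam u i| := hi j (mem_univ _)
        _ ≤ |u i| := hFu
        _ = ‖u i‖ := (Real.norm_eq_abs _).symm
        _ ≤ ‖u‖ := norm_le_pi_norm u i
    intro shat that
    rw [← map_sub]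
    exact key (shat - that)
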